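/- Let A be an arrangement in K^ℓ, H_0 ∈ A with H_0 = ker(α_0), m_0 ≥ 1, and let δ be the multiplicity with δ(H_0) = m_0 and δ(H) = 1 otherwise. Suppose (A, δ) is free with exponents {m_0, e_2, ..., e_ℓ}. Then the simple arrangement A is free with exponents {1, e_2, ..., e_ℓ}. -/

import Mathlib

open MvPolynomial

open scoped Classical

noncomputable section

/-- A (polynomial) derivation on `K[x_1,...,x_n]`, given by its coefficient
vector: `θ` represents `∑ i, θ i * ∂/∂ x i`. -/
abbrev MvDer (n : ℕ) (K : Type*) [Field K] : Type _ := Fin n → MvPolynomial (Fin n) K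

/-- Application of a derivation (given by its coefficient vector) to a polynomial,
as a linear map over the polynomial ring. -/
def derAppL {K : Type*} [Field K] {n : ℕ} (f : MvPolynomial (Fin n) K) :
    MvDer n K →ₗ[MvPolynomial (Fin n) K] MvPolynomial (Fin n) K where
  toFun θ := ∑ i, θ i * MvPolynomial.pderiv i f
  map_add' θ₁ θ₂ := by
    simp [add_mul, Finset.sum_add_distrib]
  map_smul' c θ := by
    simp [Finset.mul_sum, smul_eq_mul, mul_assoc]

/-- The module of derivations `D(A, μ)` of the multiarrangement with defining linear
forms `A` and multiplicity function `μ`: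
`D(A,μ) = {θ : θ(α) ∈ α^(μ α) · S for all α ∈ A}`. -/
def Dmod {K : Type*} [Field K] {n : ℕ} (A : Finset (MvPolynomial (Fin n) K))
    (μ : MvPolynomial (Fin n) K → ℕ) :
    Submodule (MvPolynomial (Fin n) K) (MvDer n K) :=
  ⨅ α ∈ A, Submodule.comap (derAppL α) (Ideal.span {α ^ μ α})

/-- The module of derivations of a multiarrangement given as a finite set of
(form, multiplicity) pairs. -/
def DmodP {K : Type*} [Field K] {n : ℕ} (P : Finset (MvPolynomial (Fin n) K × ℕ)) :
    Submodule (MvPolynomial (Fin n) K) (MvDer n K) :=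
  ⨅ p ∈ P, Submodule.comap (derAppL p.1) (Ideal.span {p.1 ^ p.2})

/-- A derivation is homogeneous of polynomial degree `d` if all its coefficient
polynomials are homogeneous of degree `d`. -/
def IsHomogDer {K : Type*} [Field K] {n : ℕ} (θ : MvDer n K) (d : ℕ) : Prop :=
  ∀ i, (θ i).IsHomogeneous d

/-- `θ` is a basis of the submodule `D` of the module of derivations. -/
def IsBasisOf {K : Type*} [Field K] {n : ℕ} (θ : Fin n → MvDer n K)
    (D : Submodule (MvPolynomial (Fin n) K) (MvDer n K)) : Prop :=
  (∀ i, θ i ∈ D) ∧ LinearIndependent (MvPolynomial (Fin n) K) θ ∧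
    Submodule.span (MvPolynomial (Fin n) K) (Set.range θ) = D

/-- `D` is a free module with a homogeneous basis of degrees `e 0, ..., e (n-1)`. -/
def FreeWithExps {K : Type*} [Field K] {n : ℕ}
    (D : Submodule (MvPolynomial (Fin n) K) (MvDer n K)) (e : Fin n → ℕ) : Prop :=
  ∃ θ : Fin n → MvDer n K, IsBasisOf θ D ∧ ∀ i, IsHomogDer (θ i) (e i)

/-- `D` is a free module with a homogeneous basis whose multiset of degrees is `E`. -/
def FreeWithExpM {K : Type*} [Field K] {n : ℕ}
    (D : Submodule (MvPolynomial (Fin n) K) (MvDer n K)) (E : Multiset ℕ) : Prop :=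
  ∃ (θ : Fin n → MvDer n K) (d : Fin n → ℕ), IsBasisOf θ D ∧
    (∀ i, IsHomogDer (θ i) (d i)) ∧ Multiset.map d Finset.univ.val = E

/-- The zero set (kernel) of the linear form given by the polynomial `α`. -/
def kerV {K : Type*} [Field K] {n : ℕ} (α : MvPolynomial (Fin n) K) : Set (Fin n → K) :=
  {v | MvPolynomial.eval v α = 0}

/-- Pull back a polynomial along a linear embedding `ι : K^m → K^n`; for a linear
form `α` this is the restriction of `α` to the image of `ι`, expressed in the
coordinates of `K^m`. -/
def restrictForm {K : Type*} [Field K] {m n : ℕ} (ι : (Fin m → K) →ₗ[K] (Fin n → K))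
    (α : MvPolynomial (Fin n) K) : MvPolynomial (Fin m) K :=
  MvPolynomial.aeval
    (fun i : Fin n => ∑ j : Fin m, MvPolynomial.C (ι (Pi.single j 1) i) * MvPolynomial.X j) α

/-- `A''` is (a set of defining forms for) the restriction of the arrangement `A`
to the hyperplane `H₀ = ker α₀`, where `ι` is a linear parametrization of `H₀`:
the elements of `A''` are nonzero linear forms with pairwise distinct kernels,
whose kernels are exactly the intersections `H ∩ H₀` for `H ∈ A \ {H₀}`. -/
def IsRestriction {K : Type*} [Field K] {m n : ℕ} (A : Finset (MvPolynomial (Fin n) K))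
    (α₀ : MvPolynomial (Fin n) K) (ι : (Fin m → K) →ₗ[K] (Fin n → K))
    (A'' : Finset (MvPolynomial (Fin m) K)) : Prop :=
  (∀ β ∈ A'', β.IsHomogeneous 1 ∧ β ≠ 0) ∧
  (∀ β₁ ∈ A'', ∀ β₂ ∈ A'', kerV β₁ = kerV β₂ → β₁ = β₂) ∧
  (∀ α ∈ A, α ≠ α₀ → ∃ β ∈ A'', kerV β = kerV (restrictForm ι α)) ∧
  (∀ β ∈ A'', ∃ α ∈ A, α ≠ α₀ ∧ kerV β = kerV (restrictForm ι α))

/-- Ziegler's canonical multiplicity: for a hyperplane `Y = ker β` of the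
restriction, `κ(Y) = |A_Y| - 1`, the number of hyperplanes of `A` (other than
`H₀`) lying above `Y`. -/
def zieglerMult {K : Type*} [Field K] {m n : ℕ} (A : Finset (MvPolynomial (Fin n) K))
    (ι : (Fin m → K) →ₗ[K] (Fin n → K)) (β : MvPolynomial (Fin m) K) : ℕ :=
  ({α : MvPolynomial (Fin n) K |
      α ∈ A ∧ ∀ w ∈ kerV β, MvPolynomial.eval (ι w) α = 0}).ncard - 1

end

set_option maxHeartbeats 2000000

/-! ### Auxiliary lemmas -/

noncomputable section ArrAux

open MvPolynomial Finsupp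

variable {K : Type*} [Field K] {N : ℕ}

lemma derAppL_apply' (f : MvPolynomial (Fin N) K) (θ : MvDer N K) :
    derAppL f θ = ∑ i, θ i * MvPolynomial.pderiv i f := rfl

lemma degree_eq_sum_univ (d : Fin N →₀ ℕ) : d.degree = ∑ i, d i :=
  Finset.sum_subset (Finset.subset_univ _)
    (fun i _ hi => Finsupp.notMem_support_iff.mp hi)

lemma mem_support_degree_one {α : MvPolynomial (Fin N) K} (h : α.IsHomogeneous 1)
    {d : Fin N →₀ ℕ} (hd : d ∈ α.support) : d.degree = 1 := by
  by_contra hne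
  exact (MvPolynomial.mem_support_iff.mp hd) (h.coeff_eq_zero hne)

lemma X_mul_pderiv_monomial (i : Fin N) (s : Fin N →₀ ℕ) (c : K) :
    X i * pderiv i (monomial s c) = monomial s (c * s i) := by
  rw [pderiv_monomial]
  by_cases h : s i = 0
  · simp [h]
  · rw [X, monomial_mul, one_mul]
    congr 1
    rw [add_tsub_cancel_of_le]
    exact Finsupp.single_le_iff.mpr (Nat.one_le_iff_ne_zero.mpr h)

lemma euler_degree_one {α : MvPolynomial (Fin N) K} (h : α.IsHomogeneous 1) :
    ∑ i, (X i : MvPolynomial (Fin N) K) * pderiv i α = α := by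
  conv_lhs => rw [← support_sum_monomial_coeff α]
  conv_rhs => rw [← support_sum_monomial_coeff α]
  simp_rw [map_sum, Finset.mul_sum]
  rw [Finset.sum_comm]
  refine Finset.sum_congr rfl fun d hd => ?_
  simp_rw [_root_.X_mul_pderiv_monomial]
  rw [← map_sum, ← Finset.mul_sum, ← Nat.cast_sum, ← degree_eq_sum_univ,
    mem_support_degree_one h hd]
  norm_num

lemma single_eq_of_degree_one {d : Fin N →₀ ℕ} {i : Fin N} (h1 : d.degree = 1)
    (hi : d i ≠ 0) : d = Finsupp.single i 1 := by
  rw [degree_eq_sum_univ] at h1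
  have hrest : ∑ k ∈ Finset.univ.erase i, d k = 0 ∧ d i = 1 := by
    have := Finset.add_sum_erase Finset.univ d (Finset.mem_univ i)
    omega
  ext j
  by_cases hj : j = i
  · subst hj; simp [hrest.2]
  · have : d j = 0 :=
      (Finset.sum_eq_zero_iff.mp hrest.1) j (Finset.mem_erase.mpr ⟨hj, Finset.mem_univ j⟩)
    simp [this, Finsupp.single_eq_of_ne' (Ne.symm hj)]

lemma pderiv_homog_one {α : MvPolynomial (Fin N) K} (h : α.IsHomogeneous 1) (i : Fin N) :
    (pderiv i α).IsHomogeneous 0 := by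
  conv_lhs => rw [← support_sum_monomial_coeff α]
  rw [map_sum]
  refine MvPolynomial.IsHomogeneous.sum _ _ _ fun d hd => ?_
  rw [pderiv_monomial]
  by_cases hdi : d i = 0
  · simp [hdi]
    exact isHomogeneous_zero _ _ _
  · refine isHomogeneous_monomial _ ?_
    rw [single_eq_of_degree_one (mem_support_degree_one h hd) hdi]
    simp [Finsupp.degree]

lemma hc_mul_homog {p f : MvPolynomial (Fin N) K} {dd : ℕ} (hp : p.IsHomogeneous dd) (m : ℕ) :
    homogeneousComponent m (f * p) =
      if dd ≤ m then homogeneousComponent (m - dd) f * p else 0 := by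
  conv_lhs => rw [← sum_homogeneousComponent f, Finset.sum_mul, map_sum]
  have hterm : ∀ k, homogeneousComponent m (homogeneousComponent k f * p)
      = if m = k + dd then homogeneousComponent k f * p else 0 := fun k =>
    homogeneousComponent_of_mem ((homogeneousComponent_isHomogeneous k f).mul hp)
  simp_rw [hterm]
  by_cases hdm : dd ≤ m
  · rw [if_pos hdm]
    by_cases hr : m - dd ∈ Finset.range (f.totalDegree + 1)
    · rw [Finset.sum_eq_single_of_mem (m - dd) hr
        (fun k _ hk => if_neg (by omega)), if_pos (by omega)]
    · have hz : homogeneousComponent (m - dd) f = 0 :=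
        homogeneousComponent_eq_zero (m - dd) f (by simp only [Finset.mem_range, not_lt] at hr; omega)
      rw [hz, zero_mul]
      exact Finset.sum_eq_zero fun k hk => if_neg (by
        intro hmk; apply hr; simp only [Finset.mem_range] at hk ⊢; omega)
  · rw [if_neg hdm]
    exact Finset.sum_eq_zero fun k _ => if_neg (by omega)

lemma homog_factor {q g : MvPolynomial (Fin N) K} {a b : ℕ} (hq : q.IsHomogeneous a)
    (hq0 : q ≠ 0) (h : (g * q).IsHomogeneous b) :
    (b < a → g = 0) ∧ (a ≤ b → g.IsHomogeneous (b - a)) := by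
  have key : ∀ k, k + a ≠ b → homogeneousComponent k g = 0 := by
    intro k hk
    have h1 : homogeneousComponent (k + a) (g * q) = homogeneousComponent k g * q := by
      rw [hc_mul_homog hq, if_pos (Nat.le_add_left a k), Nat.add_sub_cancel]
    have h2 : homogeneousComponent (k + a) (g * q) = 0 := by
      rw [homogeneousComponent_of_mem h, if_neg hk]
    exact (mul_eq_zero.mp (h1.symm.trans h2)).resolve_right hq0
  constructor
  · intro hba
    rw [← sum_homogeneousComponent g]
    exact Finset.sum_eq_zero fun k _ => key k (by omega)
  · intro hab
    conv_lhs => rw [← sum_homogeneousComponent g]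
    refine MvPolynomial.IsHomogeneous.sum _ _ _ fun k _ => ?_
    by_cases hk : k + a = b
    · have hkba : k = b - a := by omega
      rw [hkba]
      exact homogeneousComponent_isHomogeneous _ _
    · rw [key k hk]
      exact isHomogeneous_zero _ _ _

lemma eq_C_of_isHomog_zero {p : MvPolynomial (Fin N) K} (h : p.IsHomogeneous 0) :
    p = C (MvPolynomial.coeff 0 p) := by
  have h1 := homogeneousComponent_of_mem (m := 0) (n := 0) h
  rw [if_pos rfl] at h1
  calc p = homogeneousComponent 0 p := h1.symm
    _ = C (MvPolynomial.coeff 0 p) := homogeneousComponent_zero _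

lemma derApp_homog {θ : MvDer N K} {dd : ℕ} (hθ : IsHomogDer θ dd)
    {α : MvPolynomial (Fin N) K} (hα : α.IsHomogeneous 1) :
    (derAppL α θ).IsHomogeneous dd := by
  rw [derAppL_apply']
  refine MvPolynomial.IsHomogeneous.sum _ _ _ fun i _ => ?_
  simpa using (hθ i).mul (pderiv_homog_one hα i)

lemma mem_Dmod_iff {A : Finset (MvPolynomial (Fin N) K)} {μ : MvPolynomial (Fin N) K → ℕ}
    {θ : MvDer N K} :
    θ ∈ Dmod A μ ↔ ∀ α ∈ A, α ^ μ α ∣ derAppL α θ := by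
  simp [Dmod, Submodule.mem_iInf, Ideal.mem_span_singleton]

end ArrAux

/-- Converse: if `(A, δ)` is free with exponents `{m₀, e_2, ..., e_ℓ}` for the
multiplicity `δ` concentrated at `H₀` with value `m₀`, then the simple
arrangement `A` is free with exponents `{1, e_2, ..., e_ℓ}`. -/
theorem concentrated_multiplicity_free_converse
    {K : Type*} [Field K] {n : ℕ}
    (A : Finset (MvPolynomial (Fin (n + 1)) K))
    (hforms : ∀ α ∈ A, α.IsHomogeneous 1 ∧ α ≠ 0)
    (hdist : ∀ α ∈ A, ∀ β ∈ A, kerV α = kerV β → α = β)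
    (α₀ : MvPolynomial (Fin (n + 1)) K) (hα₀ : α₀ ∈ A)
    (m₀ : ℕ) (hm₀ : 1 ≤ m₀)
    (e : Fin (n + 1) → ℕ)
    (hfree : FreeWithExps (Dmod A fun α => if α = α₀ then m₀ else 1)
      (fun i => if i = 0 then m₀ else e i)) :
    FreeWithExps (Dmod A fun _ => 1) (fun i => if i = 0 then 1 else e i) := by
  classical
  obtain ⟨θ₀, ⟨hmemb, hind, hspan⟩, hhom⟩ := hfree
  set d : Fin (n + 1) → ℕ := fun i => if i = 0 then m₀ else e i with hd_def
  obtain ⟨hα₀h, hα₀0⟩ := hforms α₀ hα₀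
  have hα₀pow : ∀ m : ℕ, (α₀ ^ m) ≠ 0 := fun m => pow_ne_zero m hα₀0
  -- divisibility of θ₀ i (α₀) by α₀ ^ m₀
  have hdiv : ∀ i, α₀ ^ m₀ ∣ derAppL α₀ (θ₀ i) := by
    intro i
    have := mem_Dmod_iff.mp (hmemb i) α₀ hα₀
    simpa using this
  choose g hg using hdiv
  -- homogeneity of the quotients g i
  have hgkey : ∀ i, (d i < m₀ → g i = 0) ∧ (m₀ ≤ d i → (g i).IsHomogeneous (d i - m₀)) := by
    intro i
    have hq : (α₀ ^ m₀).IsHomogeneous m₀ := by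
      simpa using hα₀h.pow m₀
    have hprod : (g i * α₀ ^ m₀).IsHomogeneous (d i) := by
      rw [mul_comm, ← hg i]
      exact derApp_homog (hhom i) hα₀h
    exact homog_factor hq (hα₀pow m₀) hprod
  -- the Euler derivation
  set θE : MvDer (n + 1) K := fun k => MvPolynomial.X k with hθE_def
  have heuler : ∀ α : MvPolynomial (Fin (n + 1)) K, α.IsHomogeneous 1 →
      derAppL α θE = α := by
    intro α h
    rw [derAppL_apply']
    exact euler_degree_one h
  -- η = α₀^(m₀-1) • θE
  set η : MvDer (n + 1) K := (α₀ ^ (m₀ - 1)) • θE with hη_def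
  have hηapp : ∀ α : MvPolynomial (Fin (n + 1)) K, α.IsHomogeneous 1 →
      derAppL α η = α₀ ^ (m₀ - 1) * α := by
    intro α h
    rw [hη_def, map_smul, heuler α h, smul_eq_mul]
  have hηα₀ : derAppL α₀ η = α₀ ^ m₀ := by
    rw [hηapp α₀ hα₀h, ← pow_succ]
    congr 1
    omega
  have hη_mem : η ∈ Dmod A (fun α => if α = α₀ then m₀ else 1) := by
    rw [mem_Dmod_iff]
    intro α hα
    by_cases hcase : α = α₀
    · subst hcase
      rw [if_pos rfl, hηα₀]
    · rw [if_neg hcase, pow_one, hηapp α (hforms α hα).1]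
      exact dvd_mul_left α _
  have hη_span : η ∈ Submodule.span (MvPolynomial (Fin (n + 1)) K) (Set.range θ₀) := by
    rw [hspan]; exact hη_mem
  obtain ⟨f, hf⟩ := (Submodule.mem_span_range_iff_exists_fun _).mp hη_span
  -- homogeneous truncation of the coefficients f
  set f' : Fin (n + 1) → MvPolynomial (Fin (n + 1)) K :=
    fun i => if d i ≤ m₀ then MvPolynomial.homogeneousComponent (m₀ - d i) (f i) else 0
    with hf'_def
  have hηk_hom : ∀ k : Fin (n + 1), (η k).IsHomogeneous m₀ := by
    intro k
    have : η k = α₀ ^ (m₀ - 1) * MvPolynomial.X k := rfl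
    rw [this]
    have h1 := (hα₀h.pow (m₀ - 1)).mul (MvPolynomial.isHomogeneous_X K k)
    have h2 : 1 * (m₀ - 1) + 1 = m₀ := by omega
    rwa [h2] at h1
  have hf'rel : ∑ i, f' i • θ₀ i = η := by
    funext k
    have h1 : ∑ i, f i * θ₀ i k = η k := by
      rw [← hf]
      simp [Finset.sum_apply]
    have h2 := congrArg (MvPolynomial.homogeneousComponent m₀) h1
    rw [map_sum, MvPolynomial.homogeneousComponent_of_mem (hηk_hom k), if_pos rfl] at h2
    have h3 : ∀ i, MvPolynomial.homogeneousComponent m₀ (f i * θ₀ i k) = f' i * θ₀ i k := by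
      intro i
      rw [hc_mul_homog (hhom i k)]
      by_cases hi : d i ≤ m₀
      · rw [if_pos hi, hf'_def]; simp [hi]
      · rw [if_neg hi, hf'_def]; simp [hi]
    rw [Finset.sum_congr rfl fun i _ => h3 i] at h2
    simpa [Finset.sum_apply] using h2
  -- ∑ f' i * g i = 1
  have hsum1 : ∑ i, f' i * g i = 1 := by
    have h1 := congrArg (derAppL α₀) hf'rel
    rw [map_sum, hηα₀] at h1
    simp_rw [map_smul, smul_eq_mul, hg] at h1
    have h2 : α₀ ^ m₀ * ∑ i, f' i * g i = α₀ ^ m₀ * 1 := by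
      calc α₀ ^ m₀ * ∑ i, f' i * g i = ∑ i, f' i * (α₀ ^ m₀ * g i) := by
            rw [Finset.mul_sum]
            exact Finset.sum_congr rfl fun i _ => by ring
        _ = α₀ ^ m₀ * 1 := by rw [h1, mul_one]
    exact mul_left_cancel₀ (hα₀pow m₀) h2
  obtain ⟨j, -, hj⟩ := Finset.exists_ne_zero_of_sum_ne_zero
    (show ∑ i, f' i * g i ≠ 0 by rw [hsum1]; exact one_ne_zero)
  have hdj : d j = m₀ := by
    by_contra hne
    rcases lt_or_gt_of_ne hne with hlt | hgt
    · exact hj (by rw [(hgkey j).1 hlt, mul_zero])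
    · exact hj (by rw [hf'_def]; simp [not_le.mpr hgt])
  have hfj0 : f' j ≠ 0 := left_ne_zero_of_mul hj
  have hgj0 : g j ≠ 0 := right_ne_zero_of_mul hj
  have hfjh : (f' j).IsHomogeneous 0 := by
    rw [hf'_def]
    simp only [hdj, le_refl, if_pos, Nat.sub_self]
    exact MvPolynomial.homogeneousComponent_isHomogeneous 0 (f j)
  set a : K := MvPolynomial.coeff 0 (f' j) with ha_def
  have hfjC : f' j = MvPolynomial.C a := eq_C_of_isHomog_zero hfjh
  have ha0 : a ≠ 0 := by
    intro h
    apply hfj0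
    rw [hfjC, h, map_zero]
  -- the derivations ψ i = θ₀ i - g i • η
  set ψ : Fin (n + 1) → MvDer (n + 1) K := fun i => θ₀ i - g i • η with hψ_def
  have hψapp : ∀ i, derAppL α₀ (ψ i) = 0 := by
    intro i
    rw [hψ_def]
    simp only [map_sub, map_smul, hg i, hηα₀, smul_eq_mul]
    ring
  have hψmem : ∀ i, ∀ α ∈ A, α ∣ derAppL α (ψ i) := by
    intro i α hα
    rw [hψ_def]
    simp only [map_sub, map_smul, smul_eq_mul]
    have h1 : α ∣ derAppL α (θ₀ i) := by
      have hk := mem_Dmod_iff.mp (hmemb i) α hα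
      refine dvd_trans (dvd_pow_self α ?_) hk
      by_cases hc : α = α₀ <;> simp [hc] <;> omega
    have h2 : α ∣ derAppL α η := by
      rw [hηapp α (hforms α hα).1]
      exact dvd_mul_left α _
    exact dvd_sub h1 (Dvd.dvd.mul_left h2 (g i))
  -- the relation ∑ f' i • ψ i = 0
  have hrel : ∑ i, f' i • ψ i = (0 : MvDer (n + 1) K) := by
    have h1 : ∀ i, f' i • ψ i = f' i • θ₀ i - (f' i * g i) • η := by
      intro i
      rw [hψ_def]
      rw [smul_sub, smul_smul]
    simp_rw [h1]
    rw [Finset.sum_sub_distrib, hf'rel, ← Finset.sum_smul, hsum1, one_smul, sub_self]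
  -- ψ j lies in the span of the other ψ's
  have hψj : ψ j = ∑ i ∈ Finset.univ.erase j,
      (-(MvPolynomial.C a⁻¹) * f' i) • ψ i := by
    have h0 : f' j • ψ j + ∑ i ∈ Finset.univ.erase j, f' i • ψ i = 0 := by
      rw [Finset.add_sum_erase Finset.univ (fun i => f' i • ψ i) (Finset.mem_univ j), hrel]
    calc ψ j = (MvPolynomial.C a⁻¹ * f' j) • ψ j := by
          rw [hfjC, ← map_mul, inv_mul_cancel₀ ha0, MvPolynomial.C_1, one_smul]
      _ = MvPolynomial.C a⁻¹ • (f' j • ψ j) := by rw [smul_smul]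
      _ = MvPolynomial.C a⁻¹ • (-∑ i ∈ Finset.univ.erase j, f' i • ψ i) := by
          rw [eq_neg_of_add_eq_zero_left h0]
      _ = ∑ i ∈ Finset.univ.erase j, (-(MvPolynomial.C a⁻¹) * f' i) • ψ i := by
          rw [smul_neg, Finset.smul_sum, ← Finset.sum_neg_distrib]
          refine Finset.sum_congr rfl fun i _ => ?_
          rw [smul_smul, ← neg_smul, neg_mul]
  -- homogeneity of ψ
  have hψhom : ∀ i, IsHomogDer (ψ i) (d i) := by
    intro i k
    have hcomp : ψ i k = θ₀ i k - g i * (α₀ ^ (m₀ - 1) * MvPolynomial.X k) := rfl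
    rw [hcomp]
    refine (hhom i k).sub ?_
    by_cases hi : m₀ ≤ d i
    · have h1 := ((hgkey i).2 hi).mul ((hα₀h.pow (m₀ - 1)).mul (MvPolynomial.isHomogeneous_X K k))
      have h2 : d i - m₀ + (1 * (m₀ - 1) + 1) = d i := by omega
      rwa [h2] at h1
    · rw [(hgkey i).1 (by omega), zero_mul]
      exact MvPolynomial.isHomogeneous_zero _ _ _
  -- the swap permutation and the candidate basis
  set τ : Equiv.Perm (Fin (n + 1)) := Equiv.swap 0 j with hτ_def
  have hττ : ∀ i, τ (τ i) = i := fun i => Equiv.swap_apply_self 0 j i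
  have hτ0 : τ j = 0 := Equiv.swap_apply_right 0 j
  set σd : Fin (n + 1) → MvDer (n + 1) K :=
    fun i => if i = 0 then θE else ψ (τ i) with hσd_def
  have hdτ : ∀ i, i ≠ 0 → d (τ i) = e i := by
    intro i hi
    by_cases hij : i = j
    · subst hij
      rw [hτ0]
      have h1 : d 0 = m₀ := by simp [hd_def]
      have h2 : d i = e i := by simp [hd_def, hi]
      rw [h1, ← hdj, h2]
    · rw [hτ_def, Equiv.swap_apply_of_ne_of_ne hi hij]
      simp [hd_def, hi]
  -- homogeneity of σd
  have hσhom : ∀ i, IsHomogDer (σd i) (if i = 0 then 1 else e i) := by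
    intro i
    by_cases hi : i = 0
    · subst hi
      simp only [if_pos rfl, hσd_def]
      intro k
      exact MvPolynomial.isHomogeneous_X K k
    · simp only [if_neg hi, hσd_def]
      rw [← hdτ i hi]
      exact hψhom (τ i)
  -- membership of σd in D(A)
  have hσmem : ∀ i, σd i ∈ Dmod A (fun _ => 1) := by
    intro i
    rw [mem_Dmod_iff]
    intro α hα
    rw [pow_one]
    by_cases hi : i = 0
    · subst hi
      simp only [hσd_def, if_pos rfl]
      rw [heuler α (hforms α hα).1]
    · simp only [hσd_def, if_neg hi]
      exact hψmem (τ i) α hα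
  -- derAppL α₀ on σd
  have hσapp : ∀ i, derAppL α₀ (σd i) = if i = 0 then α₀ else 0 := by
    intro i
    by_cases hi : i = 0 <;> simp [hσd_def, hi, hψapp, heuler α₀ hα₀h]
  -- linear independence
  have hindθ := Fintype.linearIndependent_iff.mp hind
  have hindσ : ∀ b : Fin (n + 1) → MvPolynomial (Fin (n + 1)) K,
      ∑ i, b i • σd i = 0 → ∀ i, b i = 0 := by
    intro b hb
    have hb0 : b 0 = 0 := by
      have h1 := congrArg (derAppL α₀) hb
      rw [map_sum, map_zero] at h1
      simp_rw [map_smul, hσapp, smul_eq_mul, mul_ite, mul_zero] at h1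
      rw [Finset.sum_ite_eq' Finset.univ 0 (fun i => b i * α₀)] at h1
      simp only [Finset.mem_univ, if_pos] at h1
      exact (mul_eq_zero.mp h1).resolve_right hα₀0
    set b' : Fin (n + 1) → MvPolynomial (Fin (n + 1)) K :=
      fun i => if i = 0 then 0 else b i with hb'_def
    have hb'ψ : ∑ i, b' i • ψ (τ i) = 0 := by
      rw [← hb]
      refine Finset.sum_congr rfl fun i _ => ?_
      by_cases hi : i = 0
      · subst hi; simp [hb'_def, hb0]
      · simp [hb'_def, hσd_def, hi]
    set c : Fin (n + 1) → MvPolynomial (Fin (n + 1)) K := fun k => b' (τ k) with hc_def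
    have hcψ : ∑ k, c k • ψ k = 0 := by
      have := Equiv.sum_comp τ (fun k => c k • ψ k)
      rw [← this, ← hb'ψ]
      refine Finset.sum_congr rfl fun i _ => ?_
      simp only [hc_def, hττ i]
    -- expand ψ and use independence of θ₀
    set B : MvPolynomial (Fin (n + 1)) K := ∑ k, c k * g k with hB_def
    have hexp : ∑ k, (c k - B * f' k) • θ₀ k = 0 := by
      have h1 : ∀ k, (c k - B * f' k) • θ₀ k
          = c k • θ₀ k - (B * f' k) • θ₀ k := by intro k; rw [sub_smul]
      simp_rw [h1]
      rw [Finset.sum_sub_distrib]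
      have h2 : ∑ k, (B * f' k) • θ₀ k = B • η := by
        rw [← hf'rel, Finset.smul_sum]
        exact Finset.sum_congr rfl fun k _ => by rw [smul_smul]
      rw [h2]
      have h3 : ∑ k, c k • θ₀ k = B • η := by
        have h4 : ∀ k, c k • ψ k = c k • θ₀ k - (c k * g k) • η := by
          intro k
          rw [hψ_def]
          rw [smul_sub, smul_smul]
        have h5 := hcψ
        simp_rw [h4] at h5
        rw [Finset.sum_sub_distrib, sub_eq_zero] at h5
        rw [h5, ← Finset.sum_smul, hB_def]
      rw [h3, sub_self]
    have hcoef : ∀ k, c k - B * f' k = 0 := hindθ _ hexp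
    have hB0 : B = 0 := by
      have h1 := hcoef j
      have h2 : c j = 0 := by
        simp [hc_def, hτ0, hb'_def]
      rw [h2, zero_sub, neg_eq_zero, hfjC] at h1
      rcases mul_eq_zero.mp h1 with h | h
      · exact h
      · exact absurd h (by simpa [MvPolynomial.C_eq_zero] using ha0)
    have hc0 : ∀ k, c k = 0 := by
      intro k
      have := hcoef k
      rw [hB0, zero_mul, sub_zero] at this
      exact this
    intro i
    by_cases hi : i = 0
    · rw [hi]; exact hb0
    · have := hc0 (τ i)
      simp only [hc_def, hττ i, hb'_def] at this
      simpa [hi] using this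
  -- spanning
  have hθE_in : θE ∈ Submodule.span (MvPolynomial (Fin (n + 1)) K) (Set.range σd) :=
    Submodule.subset_span ⟨0, by simp [hσd_def]⟩
  have hψ_in' : ∀ k, k ≠ j → ψ k ∈ Submodule.span (MvPolynomial (Fin (n + 1)) K)
      (Set.range σd) := by
    intro k hk
    have hτk : τ (τ k) = k := hττ k
    have hτk0 : τ k ≠ 0 := by
      intro h
      apply hk
      have := congrArg τ h
      rw [hτk, hτ_def, Equiv.swap_apply_left] at this
      exact this
    refine Submodule.subset_span ⟨τ k, ?_⟩
    simp [hσd_def, hτk0, hτk]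
  have hψ_in : ∀ k, ψ k ∈ Submodule.span (MvPolynomial (Fin (n + 1)) K) (Set.range σd) := by
    intro k
    by_cases hk : k = j
    · subst hk
      rw [hψj]
      refine Submodule.sum_mem _ fun i hi => Submodule.smul_mem _ _ ?_
      exact hψ_in' i (Finset.ne_of_mem_erase hi)
    · exact hψ_in' k hk
  have hθ₀_in : ∀ i, θ₀ i ∈ Submodule.span (MvPolynomial (Fin (n + 1)) K) (Set.range σd) := by
    intro i
    have hdecomp : θ₀ i = ψ i + (g i * α₀ ^ (m₀ - 1)) • θE := by
      rw [hψ_def, hη_def]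
      funext k
      simp only [Pi.add_apply, Pi.sub_apply, Pi.smul_apply, smul_eq_mul]
      ring
    rw [hdecomp]
    exact Submodule.add_mem _ (hψ_in i) (Submodule.smul_mem _ _ hθE_in)
  have hspanσ : Submodule.span (MvPolynomial (Fin (n + 1)) K) (Set.range σd)
      = Dmod A (fun _ => 1) := by
    apply le_antisymm
    · rw [Submodule.span_le]
      rintro x ⟨i, rfl⟩
      exact hσmem i
    · intro θ' hθ'
      have hθ'div : α₀ ∣ derAppL α₀ θ' := by
        have := mem_Dmod_iff.mp hθ' α₀ hα₀
        simpa using this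
      obtain ⟨h, hh⟩ := hθ'div
      set φ : MvDer (n + 1) K := θ' - h • θE with hφ_def
      have hφmem : φ ∈ Dmod A (fun α => if α = α₀ then m₀ else 1) := by
        rw [mem_Dmod_iff]
        intro α hα
        by_cases hcase : α = α₀
        · subst hcase
          rw [if_pos rfl, hφ_def, map_sub, map_smul, heuler α hα₀h, hh, smul_eq_mul,
            mul_comm, sub_self]
          exact dvd_zero _
        · rw [if_neg hcase, pow_one, hφ_def, map_sub, map_smul, heuler α (hforms α hα).1,
            smul_eq_mul]
          have h1 : α ∣ derAppL α θ' := by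
            have := mem_Dmod_iff.mp hθ' α hα
            simpa using this
          exact dvd_sub h1 (dvd_mul_left α h)
      have hφspan : φ ∈ Submodule.span (MvPolynomial (Fin (n + 1)) K) (Set.range θ₀) := by
        rw [hspan]; exact hφmem
      obtain ⟨c, hc⟩ := (Submodule.mem_span_range_iff_exists_fun _).mp hφspan
      have hθ'eq : θ' = ∑ i, c i • θ₀ i + h • θE := by
        rw [hc, hφ_def, sub_add_cancel]
      rw [hθ'eq]
      exact Submodule.add_mem _
        (Submodule.sum_mem _ fun i _ => Submodule.smul_mem _ _ (hθ₀_in i))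
        (Submodule.smul_mem _ _ hθE_in)
  exact ⟨σd, ⟨hσmem, Fintype.linearIndependent_iff.mpr hindσ, hspanσ⟩, hσhom⟩
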